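/- Let n ≥ 1 and let U ⊆ ℝⁿ be a bounded open set. Let Ψ : ℝⁿ → [0,∞) be convex, continuous, twice continuously differentiable on ℝⁿ ∖ {0}, and positively homogeneous of degree 1; let W : ℝⁿ → ℝ be convex and continuously differentiable with ∇W(0) = 0. Let u_N : U → ℝ (N ∈ ℕ) and u : U → ℝ be Lipschitz, let f_N ∈ L^q(U) with n < q ≤ ∞, and assume: (i) for each N, u_N is a weak solution of −div(∇Ψ(∇u_N)) − div(∇W(∇u_N)) = f_N in U, i.e. there is a bounded measurable Z_N : U → ℝⁿ with Z_N(x) ∈ ∂Ψ(∇u_N(x)) for a.e. x ∈ U and ∫_U ⟨Z_N, ∇φ⟩ + ∫_U ⟨∇W(∇u_N), ∇φ⟩ = ∫_U f_N·φ for every smooth compactly supported φ : U → ℝ; (ii) there is M > 0 with |∇u_N(x)| ≤ M for a.e. x ∈ U and all N; (iii) ∇u_N(x) → ∇u(x) as N → ∞ for a.e. x ∈ U; (iv) f_N → 0 in L^q(U). Then u is a weak solution of −div(∇Ψ(∇u)) − div(∇W(∇u)) = 0 in U, i.e. there exists a bounded measurable Z : U → ℝⁿ with Z(x) ∈ ∂Ψ(∇u(x))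 for a.e. x ∈ U and ∫_U ⟨Z, ∇φ⟩ + ∫_U ⟨∇W(∇u), ∇φ⟩ = 0 for every smooth compactly supported φ : U → ℝ. -/

import Mathlib

open MeasureTheory Set Metric Filter
open scoped RealInnerProductSpace Topology ENNReal

noncomputable section

/-- `φ` is a smooth test function compactly supported in `ω`. -/
def IsTestOn {n : ℕ} (ω : Set (EuclideanSpace ℝ (Fin n))) (φ : EuclideanSpace ℝ (Fin n) → ℝ) : Prop :=
  ContDiff ℝ (⊤ : ℕ∞) φ ∧ HasCompactSupport φ ∧ tsupport φ ⊆ ω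

/-- The subdifferential of a function `Ψ : ℝⁿ → ℝ` at a point `v`. -/
def subdiffFn {n : ℕ} (Ψ : EuclideanSpace ℝ (Fin n) → ℝ) (v : EuclideanSpace ℝ (Fin n)) :
    Set (EuclideanSpace ℝ (Fin n)) :=
  {ζ | ∀ w, Ψ v + ⟪ζ, w - v⟫ ≤ Ψ w}

/-- `u` is a weak solution of `−div(∇Ψ(∇u)) − div(∇W(∇u)) = f` in the open set `Ω`. -/
def IsWeakSolutionGen (n : ℕ) (Ψ W : EuclideanSpace ℝ (Fin n) → ℝ)
    (Ω : Set (EuclideanSpace ℝ (Fin n))) (u f : EuclideanSpace ℝ (Fin n) → ℝ) : Prop :=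
  ∀ ω : Set (EuclideanSpace ℝ (Fin n)), IsOpen ω → Bornology.IsBounded ω → closure ω ⊆ Ω →
    ∃ Z : EuclideanSpace ℝ (Fin n) → EuclideanSpace ℝ (Fin n),
      Measurable Z ∧
      (∃ C : ℝ, ∀ᵐ x ∂(volume.restrict ω), ‖Z x‖ ≤ C) ∧
      (∀ᵐ x ∂(volume.restrict ω), Z x ∈ subdiffFn Ψ (gradient u x)) ∧
      ∀ φ : EuclideanSpace ℝ (Fin n) → ℝ, IsTestOn ω φ →
        (∫ x in ω, ⟪Z x, gradient φ x⟫) +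
          ∫ x in ω, ⟪gradient W (gradient u x), gradient φ x⟫
          = ∫ x in ω, f x * φ x

section AuxLemmas
variable {F : Type*} [NormedAddCommGroup F] [InnerProductSpace ℝ F] [CompleteSpace F]

/-- convex + gradient ⇒ subgradient inequality -/
theorem convex_grad_subgrad {f : F → ℝ} (hf : ConvexOn ℝ Set.univ f) {g v : F}
    (hg : HasGradientAt f g v) (w : F) : f v + ⟪g, w - v⟫ ≤ f w := by
  set d := w - v with hd
  have hline : ∀ t : ℝ, HasDerivAt (fun t : ℝ => v + t • d) d t := by
    intro t
    simpa using (hasDerivAt_id t).smul_const d |>.const_add v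
  have hcomp : HasDerivAt (fun t : ℝ => f (v + t • d)) ⟪g, d⟫ 0 := by
    have hg' : HasFDerivAt f ((InnerProductSpace.toDual ℝ F) g) (v + (0:ℝ) • d) := by
      simpa using hg.hasFDerivAt
    have := (hg'.comp_hasDerivAt 0 (hline 0))
    simpa [InnerProductSpace.toDual_apply_apply, Function.comp_def] using this
  have hslope : Tendsto (slope (fun t : ℝ => f (v + t • d)) 0) (𝓝[>] 0) (𝓝 ⟪g, d⟫) :=
    (hasDerivAt_iff_tendsto_slope.mp hcomp).mono_left
      (nhdsWithin_mono 0 (by intro x hx; exact ne_of_gt hx))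
  have hle : ∀ᶠ t in 𝓝[>] (0:ℝ), slope (fun t : ℝ => f (v + t • d)) 0 t ≤ f w - f v := by
    filter_upwards [Ioo_mem_nhdsGT_of_mem (by norm_num : (0:ℝ) ∈ Ico 0 1)] with t ht
    have h01 : 0 < t ∧ t < 1 := ⟨ht.1, ht.2⟩
    have hcvx := hf.2 (mem_univ v) (mem_univ w) (by linarith : (0:ℝ) ≤ 1 - t)
      (le_of_lt h01.1) (by ring)
    have hpt : v + t • d = (1 - t) • v + t • w := by
      rw [hd]; module
    have : f (v + t • d) ≤ (1 - t) * f v + t * f w := by rw [hpt]; simpa using hcvx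
    rw [slope_def_field]
    simp only [sub_zero, zero_smul, add_zero]
    rw [div_le_iff₀ h01.1]
    nlinarith
  have := le_of_tendsto hslope hle
  simpa using by linarith [this]

/-- subgradient at a differentiable point equals the gradient -/
theorem subgrad_eq_grad {f : F → ℝ} {g v ζ : F}
    (hg : HasGradientAt f g v) (hζ : ∀ w, f v + ⟪ζ, w - v⟫ ≤ f w) : ζ = g := by
  have key : ∀ e : F, ⟪ζ, e⟫ ≤ ⟪g, e⟫ := by
    intro e
    have hline : HasDerivAt (fun t : ℝ => v + t • e) e 0 := by
      simpa using (hasDerivAt_id (0:ℝ)).smul_const e |>.const_add v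
    have hcomp : HasDerivAt (fun t : ℝ => f (v + t • e)) ⟪g, e⟫ 0 := by
      have hg' : HasFDerivAt f ((InnerProductSpace.toDual ℝ F) g) (v + (0:ℝ) • e) := by
        simpa using hg.hasFDerivAt
      have := (hg'.comp_hasDerivAt 0 hline)
      simpa [InnerProductSpace.toDual_apply_apply, Function.comp_def] using this
    have hslope : Tendsto (slope (fun t : ℝ => f (v + t • e)) 0) (𝓝[>] 0) (𝓝 ⟪g, e⟫) :=
      (hasDerivAt_iff_tendsto_slope.mp hcomp).mono_left
        (nhdsWithin_mono 0 (by intro x hx; exact ne_of_gt hx))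
    have hge : ∀ᶠ t in 𝓝[>] (0:ℝ), ⟪ζ, e⟫ ≤ slope (fun t : ℝ => f (v + t • e)) 0 t := by
      filter_upwards [self_mem_nhdsWithin] with t (ht : 0 < t)
      have := hζ (v + t • e)
      have hsimp : ⟪ζ, v + t • e - v⟫ = t * ⟪ζ, e⟫ := by
        simp [real_inner_smul_right]
      rw [slope_def_field]
      simp only [sub_zero, zero_smul, add_zero]
      rw [le_div_iff₀ ht]
      nlinarith [this, hsimp]
    exact ge_of_tendsto hslope hge
  have h1 := key (ζ - g)
  have : ⟪ζ - g, ζ - g⟫ ≤ 0 := by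
    have := sub_nonpos.mpr h1
    rwa [← inner_sub_left] at this
  exact sub_eq_zero.mp (real_inner_self_nonpos.mp this)
variable {n : ℕ} {Ψ : EuclideanSpace ℝ (Fin n) → ℝ}

theorem psi_zero (hΨhom : ∀ lam : ℝ, 0 < lam → ∀ z, Ψ (lam • z) = lam * Ψ z) : Ψ 0 = 0 := by
  have := hΨhom 2 two_pos 0
  simp only [smul_zero] at this
  linarith

theorem psi_linear_bound (hΨcont : Continuous Ψ) (hΨnn : ∀ z, 0 ≤ Ψ z)
    (hΨhom : ∀ lam : ℝ, 0 < lam → ∀ z, Ψ (lam • z) = lam * Ψ z) :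
    ∃ L : ℝ, 0 ≤ L ∧ ∀ w, Ψ w ≤ L * ‖w‖ := by
  obtain ⟨c, -, hc'⟩ := (isCompact_closedBall (0 : EuclideanSpace ℝ (Fin n)) 1).exists_isMaxOn
    ⟨0, mem_closedBall_self zero_le_one⟩ hΨcont.continuousOn
  have hc : ∀ y ∈ closedBall (0 : EuclideanSpace ℝ (Fin n)) 1, Ψ y ≤ Ψ c := hc'
  refine ⟨Ψ c, hΨnn c, fun w => ?_⟩
  rcases eq_or_ne w 0 with rfl | hw
  · simp [psi_zero hΨhom]
  · have hn : (0:ℝ) < ‖w‖ := norm_pos_iff.mpr hw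
    have hmem : ‖w‖⁻¹ • w ∈ closedBall (0 : EuclideanSpace ℝ (Fin n)) 1 := by
      simp [norm_smul, abs_of_pos (inv_pos.mpr hn), inv_mul_cancel₀ (ne_of_gt hn)]
    have := hΨhom ‖w‖ hn (‖w‖⁻¹ • w)
    rw [smul_smul, mul_inv_cancel₀ (ne_of_gt hn), one_smul] at this
    rw [this]
    calc ‖w‖ * Ψ (‖w‖⁻¹ • w) ≤ ‖w‖ * Ψ c :=
          mul_le_mul_of_nonneg_left (hc _ hmem) (le_of_lt hn)
      _ = Ψ c * ‖w‖ := mul_comm _ _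

theorem mem_K_of_subdiff (hΨhom : ∀ lam : ℝ, 0 < lam → ∀ z, Ψ (lam • z) = lam * Ψ z)
    {v ζ : EuclideanSpace ℝ (Fin n)} (hζ : ζ ∈ subdiffFn Ψ v) :
    ∀ w, ⟪ζ, w⟫ ≤ Ψ w := by
  intro w
  by_contra h
  push_neg at h
  set ε := ⟪ζ, w⟫ - Ψ w with hε
  have hεpos : 0 < ε := by linarith
  set c := ⟪ζ, v⟫ - Ψ v with hc
  set t := max 1 (c / ε + 1) with ht
  have htpos : (0:ℝ) < t := lt_of_lt_of_le one_pos (le_max_left _ _)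
  have h1 := hζ (t • w)
  rw [hΨhom t htpos w] at h1
  have hin : ⟪ζ, t • w - v⟫ = t * ⟪ζ, w⟫ - ⟪ζ, v⟫ := by
    rw [inner_sub_right, real_inner_smul_right]
  have h2 : t * ε ≤ c := by rw [hε, hc]; nlinarith [h1, hin]
  have h3 : c / ε + 1 ≤ t := le_max_right _ _
  have : c + ε ≤ t * ε := by
    have := mul_le_mul_of_nonneg_right h3 (le_of_lt hεpos)
    rw [add_mul, div_mul_cancel₀ _ (ne_of_gt hεpos), one_mul] at this
    linarith
  linarith

theorem norm_le_of_K {L : ℝ} (hL : 0 ≤ L) (hlin : ∀ w, Ψ w ≤ L * ‖w‖)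
    {ζ : EuclideanSpace ℝ (Fin n)} (hK : ∀ w, ⟪ζ, w⟫ ≤ Ψ w) : ‖ζ‖ ≤ L := by
  rcases eq_or_ne ζ 0 with rfl | hζ
  · simpa using hL
  · have hn : (0:ℝ) < ‖ζ‖ := norm_pos_iff.mpr hζ
    have h1 : ‖ζ‖ ^ 2 ≤ L * ‖ζ‖ := by
      have := (hK ζ).trans (hlin ζ)
      rwa [real_inner_self_eq_norm_sq] at this
    nlinarith

theorem K_subdiff_zero (hΨ0 : Ψ 0 = 0) {ζ : EuclideanSpace ℝ (Fin n)}
    (hK : ∀ w, ⟪ζ, w⟫ ≤ Ψ w) : ζ ∈ subdiffFn Ψ 0 := by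
  intro w
  simpa [hΨ0] using hK w

theorem weak_cluster {H : Type*} [NormedAddCommGroup H] [InnerProductSpace ℝ H]
    [CompleteSpace H] (ζ : ℕ → H) (R : ℝ) (hR : ∀ N, ‖ζ N‖ ≤ R) :
    ∃ (Z' : H) (𝒰 : Ultrafilter ℕ), ↑𝒰 ≤ (atTop : Filter ℕ) ∧
      ∀ g : H, Tendsto (fun N => ⟪ζ N, g⟫) 𝒰 (𝓝 ⟪Z', g⟫) := by
  set D := InnerProductSpace.toDual ℝ H
  set y : ℕ → WeakDual ℝ H := fun N => StrongDual.toWeakDual (D (ζ N)) with hy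
  set S : Set (WeakDual ℝ H) := (WeakDual.toStrongDual (𝕜 := ℝ) (E := H)) ⁻¹' closedBall (0 : StrongDual ℝ H) R with hS
  have hcompact : IsCompact S := WeakDual.isCompact_closedBall (0 : StrongDual ℝ H) R
  have hyS : ∀ N, y N ∈ S := by
    intro N
    simp only [hS, mem_preimage, mem_closedBall, dist_zero_right]
    show ‖D (ζ N)‖ ≤ R
    rw [D.norm_map]
    exact hR N
  set 𝒰 : Ultrafilter ℕ := Ultrafilter.of atTop with h𝒰
  have hle : ↑𝒰 ≤ (atTop : Filter ℕ) := Ultrafilter.of_le _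
  have hmem : S ∈ (𝒰.map y) := by
    refine Filter.mem_map.mpr ?_
    have : y ⁻¹' S = univ := eq_univ_of_forall hyS
    rw [this]; exact Filter.univ_mem
  obtain ⟨ℓ, hℓS, hℓ⟩ := hcompact.ultrafilter_le_nhds (𝒰.map y)
    (le_principal_iff.mpr hmem)
  have htend : Tendsto y 𝒰 (𝓝 ℓ) := hℓ
  refine ⟨D.symm (WeakDual.toStrongDual ℓ), 𝒰, hle, fun g => ?_⟩
  have hev := tendsto_iff_forall_eval_tendsto_topDualPairing.mp htend g
  have h1 : ∀ N, (topDualPairing ℝ H) (y N) g = ⟪ζ N, g⟫ := by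
    intro N
    show (D (ζ N)) g = _
    exact InnerProductSpace.toDual_apply_apply
  have h2 : (topDualPairing ℝ H) ℓ g = ⟪D.symm (WeakDual.toStrongDual ℓ), g⟫ := by
    have hDs : D (D.symm (WeakDual.toStrongDual ℓ)) = WeakDual.toStrongDual ℓ :=
      D.apply_symm_apply _
    rw [← InnerProductSpace.toDual_apply_apply (𝕜 := ℝ)]
    show (WeakDual.toStrongDual (𝕜 := ℝ) ℓ) g = _
    rw [hDs]
  rw [← h2]
  exact hev.congr (fun N => h1 N)
end AuxLemmas

set_option maxHeartbeats 1000000 in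
/-- **Stability of the generalized equation under a.e. gradient convergence.** If `u_N` solves
`−div(∇Ψ(∇u_N)) − div(∇W(∇u_N)) = f_N` weakly in a bounded open set `U`, with uniformly bounded
gradients converging a.e. to `∇u`, and `f_N → 0` in `L^q(U)` with `n < q`, then `u` solves
`−div(∇Ψ(∇u)) − div(∇W(∇u)) = 0` weakly in `U`. -/
theorem stmt_10 {n : ℕ} (hn : 1 ≤ n) (U : Set (EuclideanSpace ℝ (Fin n)))
    (hUo : IsOpen U) (hUb : Bornology.IsBounded U)
    (Ψ W : EuclideanSpace ℝ (Fin n) → ℝ)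
    (hΨnn : ∀ z, 0 ≤ Ψ z)
    (hΨconv : ConvexOn ℝ Set.univ Ψ)
    (hΨcont : Continuous Ψ)
    (hΨC2 : ContDiffOn ℝ 2 Ψ {(0 : EuclideanSpace ℝ (Fin n))}ᶜ)
    (hΨhom : ∀ lam : ℝ, 0 < lam → ∀ z, Ψ (lam • z) = lam * Ψ z)
    (hWconv : ConvexOn ℝ Set.univ W)
    (hWC1 : ContDiff ℝ 1 W)
    (hW0 : gradient W 0 = 0)
    (uN : ℕ → EuclideanSpace ℝ (Fin n) → ℝ) (u : EuclideanSpace ℝ (Fin n) → ℝ)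
    (huN_lip : ∀ N, ∃ K : NNReal, LipschitzOnWith K (uN N) U)
    (hu_lip : ∃ K : NNReal, LipschitzOnWith K u U)
    (fN : ℕ → EuclideanSpace ℝ (Fin n) → ℝ)
    (q : ℝ≥0∞) (hq : (n : ℝ≥0∞) < q)
    (hfN : ∀ N, MemLp (fN N) q (volume.restrict U))
    (hsolN : ∀ N, ∃ ZN : EuclideanSpace ℝ (Fin n) → EuclideanSpace ℝ (Fin n),
      Measurable ZN ∧
      (∃ C : ℝ, ∀ᵐ x ∂(volume.restrict U), ‖ZN x‖ ≤ C) ∧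
      (∀ᵐ x ∂(volume.restrict U), ZN x ∈ subdiffFn Ψ (gradient (uN N) x)) ∧
      ∀ φ : EuclideanSpace ℝ (Fin n) → ℝ, IsTestOn U φ →
        (∫ x in U, ⟪ZN x, gradient φ x⟫) +
          (∫ x in U, ⟪gradient W (gradient (uN N) x), gradient φ x⟫)
          = ∫ x in U, fN N x * φ x)
    (hgrad_bdd : ∃ M : ℝ, 0 < M ∧ ∀ N, ∀ᵐ x ∂(volume.restrict U), ‖gradient (uN N) x‖ ≤ M)
    (hgrad_conv : ∀ᵐ x ∂(volume.restrict U),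
      Tendsto (fun N => gradient (uN N) x) atTop (𝓝 (gradient u x)))
    (hfN_conv : Tendsto (fun N => eLpNorm (fN N) q (volume.restrict U)) atTop (𝓝 0)) :
    ∃ Z : EuclideanSpace ℝ (Fin n) → EuclideanSpace ℝ (Fin n),
      Measurable Z ∧
      (∃ C : ℝ, ∀ᵐ x ∂(volume.restrict U), ‖Z x‖ ≤ C) ∧
      (∀ᵐ x ∂(volume.restrict U), Z x ∈ subdiffFn Ψ (gradient u x)) ∧
      ∀ φ : EuclideanSpace ℝ (Fin n) → ℝ, IsTestOn U φ →
        (∫ x in U, ⟪Z x, gradient φ x⟫) +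
          (∫ x in U, ⟪gradient W (gradient u x), gradient φ x⟫) = 0 := by

  classical
  have hE : True := trivial
  set μ : Measure (EuclideanSpace ℝ (Fin n)) := volume.restrict U with hμ
  haveI hfin : IsFiniteMeasure μ :=
    ⟨by rw [hμ, Measure.restrict_apply_univ]; exact hUb.measure_lt_top⟩
  -- basic Ψ facts
  have hΨ0 : Ψ 0 = 0 := psi_zero hΨhom
  obtain ⟨L, hL0, hLlin⟩ := psi_linear_bound hΨcont hΨnn hΨhom
  have hΨgrad : ∀ v : (EuclideanSpace ℝ (Fin n)), v ≠ 0 → HasGradientAt Ψ (gradient Ψ v) v := by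
    intro v hv
    exact ((hΨC2.contDiffAt (isOpen_compl_singleton.mem_nhds hv)).differentiableAt
      (by norm_num)).hasGradientAt
  have hΨgradcont : ∀ v : (EuclideanSpace ℝ (Fin n)), v ≠ 0 → ContinuousAt (fun z => gradient Ψ z) v := by
    intro v hv
    have h1 : ContinuousOn (fderiv ℝ Ψ) ({(0:(EuclideanSpace ℝ (Fin n)))}ᶜ) :=
      hΨC2.continuousOn_fderiv_of_isOpen isOpen_compl_singleton (by norm_num)
    have h2 : ContinuousAt (fderiv ℝ Ψ) v := h1.continuousAt (isOpen_compl_singleton.mem_nhds hv)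
    exact ((LinearIsometryEquiv.continuous _).continuousAt).comp h2
  have hsingle : ∀ v : (EuclideanSpace ℝ (Fin n)), v ≠ 0 → ∀ ζ : (EuclideanSpace ℝ (Fin n)), ζ ∈ subdiffFn Ψ v → ζ = gradient Ψ v :=
    fun v hv ζ hζ => subgrad_eq_grad (hΨgrad v hv) hζ
  have hmemgrad : ∀ v : (EuclideanSpace ℝ (Fin n)), v ≠ 0 → gradient Ψ v ∈ subdiffFn Ψ v :=
    fun v hv w => convex_grad_subgrad hΨconv (hΨgrad v hv) w
  have hKnorm : ∀ (v ζ : (EuclideanSpace ℝ (Fin n))), ζ ∈ subdiffFn Ψ v → ‖ζ‖ ≤ L :=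
    fun v ζ h => norm_le_of_K hL0 hLlin (mem_K_of_subdiff hΨhom h)
  -- choose the approximating vector fields
  choose Z hZmeas hZbdd hZsub hZeq using hsolN
  have hZL : ∀ N, ∀ᵐ x ∂μ, ‖Z N x‖ ≤ L := by
    intro N
    filter_upwards [hZsub N] with x hx
    exact hKnorm _ _ hx
  have hZmem : ∀ N, MemLp (Z N) 2 μ := fun N =>
    MemLp.of_bound (hZmeas N).aestronglyMeasurable L (hZL N)
  set ζs : ℕ → Lp (EuclideanSpace ℝ (Fin n)) 2 μ := fun N => (hZmem N).toLp (Z N) with hζs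
  set R : ℝ := ((μ Set.univ) ^ (2:ℝ≥0∞).toReal⁻¹ * ENNReal.ofReal L).toReal with hR
  have hRfin : (μ Set.univ) ^ (2:ℝ≥0∞).toReal⁻¹ * ENNReal.ofReal L ≠ ⊤ :=
    ENNReal.mul_ne_top (ENNReal.rpow_ne_top_of_nonneg (by norm_num) (measure_ne_top μ _))
      ENNReal.ofReal_ne_top
  have hζnorm : ∀ N, ‖ζs N‖ ≤ R := by
    intro N
    rw [hζs]
    rw [Lp.norm_toLp]
    exact ENNReal.toReal_mono hRfin (eLpNorm_le_of_ae_bound (hZL N))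
  obtain ⟨Z', 𝒰, hle, hkey⟩ := weak_cluster ζs R hζnorm
  haveI : (𝒰 : Filter ℕ).NeBot := Ultrafilter.neBot 𝒰
  set Zc : (EuclideanSpace ℝ (Fin n)) → (EuclideanSpace ℝ (Fin n)) := ⇑Z' with hZc
  have hZcmem : MemLp Zc 2 μ := Lp.memLp Z'
  have hZcint : Integrable Zc μ := hZcmem.integrable one_le_two
  -- weak convergence against arbitrary L² functions
  have hkey' : ∀ (g : (EuclideanSpace ℝ (Fin n)) → (EuclideanSpace ℝ (Fin n))), MemLp g 2 μ →
      Tendsto (fun N => ∫ x, ⟪Z N x, g x⟫ ∂μ) 𝒰 (𝓝 (∫ x, ⟪Zc x, g x⟫ ∂μ)) := by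
    intro g hg
    have h1 := hkey (hg.toLp g)
    have e1 : ∀ N, ⟪ζs N, hg.toLp g⟫ = ∫ x, ⟪Z N x, g x⟫ ∂μ := by
      intro N
      rw [L2.inner_def]
      refine integral_congr_ae ?_
      filter_upwards [(hZmem N).coeFn_toLp, hg.coeFn_toLp] with x e1 e2
      rw [hζs]; rw [e1, e2]
    have e2 : ⟪Z', hg.toLp g⟫ = ∫ x, ⟪Zc x, g x⟫ ∂μ := by
      rw [L2.inner_def]
      refine integral_congr_ae ?_
      filter_upwards [hg.coeFn_toLp] with x e2
      rw [e2]
    rw [e2] at h1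
    exact h1.congr (fun N => e1 N)
  -- a.e. membership in K = ∂Ψ(0)
  have hKset : ∀ w : (EuclideanSpace ℝ (Fin n)), ∀ᵐ x ∂μ, ⟪Zc x, w⟫ ≤ Ψ w := by
    intro w
    have hint : Integrable (fun x => ⟪Zc x, w⟫) μ := hZcint.inner_const w
    have hset : ∀ s : Set (EuclideanSpace ℝ (Fin n)), MeasurableSet s → ∫ x in s, ⟪Zc x, w⟫ ∂μ ≤ Ψ w * (μ s).toReal := by
      intro s hs
      have hglp : MemLp (s.indicator (fun _ => w)) 2 μ := (memLp_const w).indicator hs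
      have heq : ∀ (V : (EuclideanSpace ℝ (Fin n)) → (EuclideanSpace ℝ (Fin n))), (∫ x, ⟪V x, s.indicator (fun _ => w) x⟫ ∂μ)
          = ∫ x in s, ⟪V x, w⟫ ∂μ := by
        intro V
        rw [← integral_indicator hs]
        congr 1
        funext x
        by_cases hxs : x ∈ s
        · rw [Set.indicator_of_mem hxs, Set.indicator_of_mem hxs]
        · rw [Set.indicator_of_notMem hxs, Set.indicator_of_notMem hxs, inner_zero_right]
      have hT := hkey' _ hglp
      rw [heq] at hT
      have hTcong : Tendsto (fun N => ∫ x in s, ⟪Z N x, w⟫ ∂μ) 𝒰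
          (𝓝 (∫ x in s, ⟪Zc x, w⟫ ∂μ)) := by
        refine hT.congr (fun N => heq (Z N))
      refine le_of_tendsto hTcong (Filter.Eventually.of_forall ?_)
      intro N
      have hboundN : ∀ᵐ x ∂(μ.restrict s), ⟪Z N x, w⟫ ≤ Ψ w := by
        refine ae_restrict_of_ae ?_
        filter_upwards [hZsub N] with x hx
        exact mem_K_of_subdiff hΨhom hx w
      have hintN : Integrable (fun x => ⟪Z N x, w⟫) (μ.restrict s) :=
        (((hZmem N).restrict s).integrable one_le_two).inner_const w
      calc ∫ x in s, ⟪Z N x, w⟫ ∂μ ≤ ∫ _ in s, Ψ w ∂μ :=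
            integral_mono_ae hintN (integrable_const _) hboundN
        _ = Ψ w * (μ s).toReal := by rw [setIntegral_const, smul_eq_mul, mul_comm]; rfl
    have : ∀ᵐ x ∂μ, 0 ≤ Ψ w - ⟪Zc x, w⟫ := by
      refine ae_nonneg_of_forall_setIntegral_nonneg ((integrable_const (Ψ w)).sub hint) ?_
      intro s hs _
      rw [integral_sub (integrable_const _).restrict hint.restrict, setIntegral_const,
        smul_eq_mul]
      have := hset s hs
      rw [show μ.real s = (μ s).toReal from rfl]
      linarith [hset s hs]
    filter_upwards [this] with x hx
    linarith
  have hKae : ∀ᵐ x ∂μ, ∀ w, ⟪Zc x, w⟫ ≤ Ψ w := by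
    have hD := TopologicalSpace.denseRange_denseSeq (EuclideanSpace ℝ (Fin n))
    have := ae_all_iff.mpr (fun k => hKset (TopologicalSpace.denseSeq (EuclideanSpace ℝ (Fin n)) k))
    filter_upwards [this] with x hx
    intro w
    have hC : IsClosed {w : (EuclideanSpace ℝ (Fin n)) | ⟪Zc x, w⟫ ≤ Ψ w} :=
      isClosed_le (Continuous.inner continuous_const continuous_id) hΨcont
    have hsub : Set.range (TopologicalSpace.denseSeq (EuclideanSpace ℝ (Fin n))) ⊆ {w : (EuclideanSpace ℝ (Fin n)) | ⟪Zc x, w⟫ ≤ Ψ w} := by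
      rintro - ⟨k, rfl⟩; exact hx k
    have := hC.closure_subset_iff.mpr hsub
    exact this (hD.closure_range ▸ Set.mem_univ w : w ∈ closure (Set.range _))
  -- a.e. identification on the set where ∇u ≠ 0
  set h : (EuclideanSpace ℝ (Fin n)) → (EuclideanSpace ℝ (Fin n)) := fun x => if gradient u x = 0 then 0 else gradient Ψ (gradient u x) with hh
  have hgradmeas : ∀ f : (EuclideanSpace ℝ (Fin n)) → ℝ, Measurable (fun x => gradient f x) := by
    intro f
    exact (LinearIsometryEquiv.continuous _).measurable.comp (measurable_fderiv ℝ f)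
  have hAmeas : MeasurableSet {x : (EuclideanSpace ℝ (Fin n)) | gradient u x = 0} :=
    (hgradmeas u) (measurableSet_singleton 0)
  have hhmeas : Measurable h := by
    refine Measurable.ite hAmeas measurable_const ?_
    exact (hgradmeas Ψ).comp (hgradmeas u)
  have hhbdd : ∀ x, ‖h x‖ ≤ L := by
    intro x
    rw [hh]
    by_cases hx : gradient u x = 0
    · simpa [hx] using hL0
    · simp only [if_neg hx]
      exact hKnorm _ _ (hmemgrad _ hx)
  have hhmem : MemLp h 2 μ :=
    MemLp.of_bound hhmeas.aestronglyMeasurable L (Filter.Eventually.of_forall hhbdd)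
  have hhint : Integrable h μ := hhmem.integrable one_le_two
  set A : Set (EuclideanSpace ℝ (Fin n)) := {x : (EuclideanSpace ℝ (Fin n)) | gradient u x ≠ 0} with hA
  have hAmeas' : MeasurableSet A := hAmeas.compl
  set gfun : (EuclideanSpace ℝ (Fin n)) → (EuclideanSpace ℝ (Fin n)) := A.indicator (fun x => Zc x - h x) with hgfun
  have hgmem : MemLp gfun 2 μ := (hZcmem.sub hhmem).indicator hAmeas'
  have hgint : Integrable gfun μ := hgmem.integrable one_le_two
  have hgaem : AEStronglyMeasurable gfun μ :=
    ((Lp.aestronglyMeasurable Z').sub hhmeas.aestronglyMeasurable).indicator hAmeas'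
  -- dominated convergence: ∫⟪Z_N, gfun⟫ → ∫⟪h, gfun⟫
  have hT1 : Tendsto (fun N => ∫ x, ⟪Z N x, gfun x⟫ ∂μ) atTop (𝓝 (∫ x, ⟪h x, gfun x⟫ ∂μ)) := by
    refine tendsto_integral_of_dominated_convergence (fun x => L * ‖gfun x‖) ?_ ?_ ?_ ?_
    · intro N
      exact ((hZmeas N).aestronglyMeasurable.inner hgaem)
    · exact hgint.norm.const_mul L
    · intro N
      filter_upwards [hZL N] with x hx
      calc ‖⟪Z N x, gfun x⟫‖ = |⟪Z N x, gfun x⟫| := rfl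
        _ ≤ ‖Z N x‖ * ‖gfun x‖ := abs_real_inner_le_norm _ _
        _ ≤ L * ‖gfun x‖ := mul_le_mul_of_nonneg_right hx (norm_nonneg _)
    · have hsuball : ∀ᵐ x ∂μ, ∀ N, Z N x ∈ subdiffFn Ψ (gradient (uN N) x) :=
        ae_all_iff.mpr hZsub
      filter_upwards [hsuball, hgrad_conv] with x hsub hconv
      by_cases hx0 : gradient u x = 0
      · have hxA : x ∉ A := by simp [hA, hx0]
        have : gfun x = 0 := Set.indicator_of_notMem hxA _
        simp only [this, inner_zero_right]
        exact tendsto_const_nhds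
      · have hev : ∀ᶠ N in atTop, gradient (uN N) x ≠ 0 := by
          have hmem : ({(0:(EuclideanSpace ℝ (Fin n)))}ᶜ : Set (EuclideanSpace ℝ (Fin n))) ∈ 𝓝 (gradient u x) :=
            isOpen_compl_singleton.mem_nhds hx0
          exact hconv.eventually (eventually_mem_set.mpr hmem)
        have heq : ∀ᶠ N in atTop,
            ⟪Z N x, gfun x⟫ = ⟪gradient Ψ (gradient (uN N) x), gfun x⟫ := by
          filter_upwards [hev] with N hN
          rw [hsingle _ hN _ (hsub N)]
        have hlim : Tendsto (fun N => ⟪gradient Ψ (gradient (uN N) x), gfun x⟫) atTop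
            (𝓝 ⟪h x, gfun x⟫) := by
          have hgr : Tendsto (fun N => gradient Ψ (gradient (uN N) x)) atTop
              (𝓝 (gradient Ψ (gradient u x))) :=
            (hΨgradcont _ hx0).tendsto.comp hconv
          have : h x = gradient Ψ (gradient u x) := by rw [hh]; simp [if_neg hx0]
          rw [this]
          exact hgr.inner tendsto_const_nhds
        exact Tendsto.congr' (by filter_upwards [heq] with N hN; exact hN.symm) hlim
  have hT2 := hkey' gfun hgmem
  have huniq : ∫ x, ⟪Zc x, gfun x⟫ ∂μ = ∫ x, ⟪h x, gfun x⟫ ∂μ :=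
    tendsto_nhds_unique hT2 (hT1.mono_left hle)
  -- integrability of the inner products
  have hinner_int : ∀ (p : (EuclideanSpace ℝ (Fin n)) → (EuclideanSpace ℝ (Fin n))), MemLp p 2 μ → AEStronglyMeasurable p μ →
      Integrable (fun x => ⟪p x, gfun x⟫) μ := by
    intro p hp hpm
    have := L2.integrable_inner (𝕜 := ℝ) (hp.toLp p) (hgmem.toLp gfun)
    refine this.congr ?_
    filter_upwards [hp.coeFn_toLp, hgmem.coeFn_toLp] with x e1 e2
    rw [e1, e2]
  have hint1 : Integrable (fun x => ⟪Zc x, gfun x⟫) μ :=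
    hinner_int Zc hZcmem (Lp.aestronglyMeasurable Z')
  have hint2 : Integrable (fun x => ⟪h x, gfun x⟫) μ :=
    hinner_int h hhmem hhmeas.aestronglyMeasurable
  have hzero : ∫ x, (⟪Zc x, gfun x⟫ - ⟪h x, gfun x⟫) ∂μ = 0 := by
    rw [integral_sub hint1 hint2, huniq, sub_self]
  have hptwise : ∀ x, ⟪Zc x, gfun x⟫ - ⟪h x, gfun x⟫
      = A.indicator (fun y => ‖Zc y - h y‖ ^ 2) x := by
    intro x
    by_cases hxA : x ∈ A
    · rw [Set.indicator_of_mem hxA, hgfun, Set.indicator_of_mem hxA, ← inner_sub_left,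
        real_inner_self_eq_norm_sq]
    · rw [Set.indicator_of_notMem hxA, hgfun, Set.indicator_of_notMem hxA, inner_zero_right,
        inner_zero_right, sub_self]
  have hAzero : ∀ᵐ x ∂μ, x ∈ A → Zc x = h x := by
    have hint3 : Integrable (fun x => A.indicator (fun y => ‖Zc y - h y‖ ^ 2) x) μ := by
      refine (hint1.sub hint2).congr (Filter.Eventually.of_forall hptwise)
    have hzero' : ∫ x, A.indicator (fun y => ‖Zc y - h y‖ ^ 2) x ∂μ = 0 := by
      rw [← hzero]
      exact integral_congr_ae (Filter.Eventually.of_forall (fun x => (hptwise x).symm))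
    have hnn : 0 ≤ᵐ[μ] fun x => A.indicator (fun y => ‖Zc y - h y‖ ^ 2) x := by
      refine Filter.Eventually.of_forall (fun x => ?_)
      exact Set.indicator_nonneg (fun y _ => sq_nonneg _) x
    have := (integral_eq_zero_iff_of_nonneg_ae hnn hint3).mp hzero'
    filter_upwards [this] with x hx hxA
    rw [Set.indicator_of_mem hxA] at hx
    have h0 : Zc x - h x = 0 := by simpa using hx
    exact sub_eq_zero.mp h0
  -- the final candidate
  refine ⟨Zc, (Lp.stronglyMeasurable Z').measurable, ⟨L, ?_⟩, ?_, ?_⟩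
  · filter_upwards [hKae] with x hx
    exact norm_le_of_K hL0 hLlin hx
  · filter_upwards [hKae, hAzero] with x hxK hxA
    by_cases hx0 : gradient u x = 0
    · rw [hx0]
      exact K_subdiff_zero hΨ0 hxK
    · have hmemA : x ∈ A := hx0
      rw [hxA hmemA, hh]
      simp only [if_neg hx0]
      exact hmemgrad _ hx0
  · intro φ hφ
    -- the gradient of the test function is bounded continuous with compact support
    have hφcont : Continuous φ := hφ.1.continuous
    have hgradφcont : Continuous (fun x => gradient φ x) :=
      (LinearIsometryEquiv.continuous _).comp (hφ.1.continuous_fderiv (by simp))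
    have hgradφsupp : HasCompactSupport (fun x => gradient φ x) := by
      have h1 : HasCompactSupport (fderiv ℝ φ) := hφ.2.1.fderiv (𝕜 := ℝ)
      exact h1.comp_left (map_zero _)
    obtain ⟨Cφ, hCφ⟩ := hgradφsupp.exists_bound_of_continuous hgradφcont
    have hgradφmem : MemLp (fun x => gradient φ x) 2 μ :=
      MemLp.of_bound hgradφcont.aestronglyMeasurable Cφ (Filter.Eventually.of_forall hCφ)
    -- limit of the Z_N term
    have hTZ : Tendsto (fun N => ∫ x, ⟪Z N x, gradient φ x⟫ ∂μ) 𝒰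
        (𝓝 (∫ x, ⟪Zc x, gradient φ x⟫ ∂μ)) := hkey' _ hgradφmem
    -- limit of the W term
    obtain ⟨M, hM, hMae⟩ := hgrad_bdd
    have hgradWcont : Continuous (fun v : (EuclideanSpace ℝ (Fin n)) => gradient W v) :=
      (LinearIsometryEquiv.continuous _).comp (hWC1.continuous_fderiv one_ne_zero)
    obtain ⟨cW, -, hcW'⟩ := (isCompact_closedBall (0:(EuclideanSpace ℝ (Fin n))) M).exists_isMaxOn
      ⟨0, mem_closedBall_self hM.le⟩ hgradWcont.norm.continuousOn
    have hcW : ∀ y ∈ closedBall (0:(EuclideanSpace ℝ (Fin n))) M, ‖gradient W y‖ ≤ ‖gradient W cW‖ := hcW'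
    have hCφ0 : 0 ≤ Cφ := le_trans (norm_nonneg _) (hCφ 0)
    have hTW : Tendsto (fun N => ∫ x, ⟪gradient W (gradient (uN N) x), gradient φ x⟫ ∂μ) atTop
        (𝓝 (∫ x, ⟪gradient W (gradient u x), gradient φ x⟫ ∂μ)) := by
      refine tendsto_integral_of_dominated_convergence
        (fun _ => ‖gradient W cW‖ * Cφ) ?_ ?_ ?_ ?_
      · intro N
        exact ((hgradWcont.measurable.comp (hgradmeas (uN N))).inner
          hgradφcont.measurable).aestronglyMeasurable
      · exact integrable_const _
      · intro N
        filter_upwards [hMae N] with x hx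
        calc ‖⟪gradient W (gradient (uN N) x), gradient φ x⟫‖
            ≤ ‖gradient W (gradient (uN N) x)‖ * ‖gradient φ x‖ := abs_real_inner_le_norm _ _
          _ ≤ ‖gradient W cW‖ * Cφ := by
              refine mul_le_mul ?_ (hCφ x) (norm_nonneg _) (norm_nonneg _)
              exact hcW _ (by simpa [mem_closedBall, dist_zero_right] using hx)
      · filter_upwards [hgrad_conv] with x hx
        exact ((hgradWcont.continuousAt).tendsto.comp hx).inner tendsto_const_nhds
    -- limit of the right-hand side
    obtain ⟨Cφ', hCφ'⟩ := hφ.2.1.exists_bound_of_continuous hφcont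
    have hq1 : (1:ℝ≥0∞) ≤ q := by
      refine le_of_lt (lt_of_le_of_lt ?_ hq)
      exact_mod_cast hn
    have hTf : Tendsto (fun N => ∫ x, fN N x * φ x ∂μ) atTop (𝓝 0) := by
      have hone : ∀ N, eLpNorm (fN N) 1 μ
          ≤ eLpNorm (fN N) q μ * (μ Set.univ) ^ (1/(1:ℝ≥0∞).toReal - 1/q.toReal) := fun N =>
        eLpNorm_le_eLpNorm_mul_rpow_measure_univ hq1 (hfN N).1
      have hexp : 0 ≤ 1/(1:ℝ≥0∞).toReal - 1/q.toReal := by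
        rcases eq_or_ne q ⊤ with rfl | hqt
        · simp
        · have h1 : (1:ℝ) ≤ q.toReal := by
            have := ENNReal.toReal_mono hqt hq1
            simpa using this
          have : 1/q.toReal ≤ 1 := by
            rw [div_le_one (by linarith)]; linarith
          simpa using this
      have hconst_ne : (μ Set.univ) ^ (1/(1:ℝ≥0∞).toReal - 1/q.toReal) ≠ ⊤ :=
        ENNReal.rpow_ne_top_of_nonneg hexp (measure_ne_top μ _)
      have hup : Tendsto (fun N => eLpNorm (fN N) q μ *
          (μ Set.univ) ^ (1/(1:ℝ≥0∞).toReal - 1/q.toReal)) atTop (𝓝 0) := by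
        have := ENNReal.Tendsto.mul_const hfN_conv (Or.inr hconst_ne)
        simpa using this
      have h1tend : Tendsto (fun N => eLpNorm (fN N) 1 μ) atTop (𝓝 0) := by
        refine tendsto_of_tendsto_of_tendsto_of_le_of_le tendsto_const_nhds hup
          (fun N => zero_le) hone
      have h1tendR : Tendsto (fun N => (eLpNorm (fN N) 1 μ).toReal) atTop (𝓝 0) := by
        have := (ENNReal.tendsto_toReal (by simp)).comp h1tend
        simpa [Function.comp_def] using this
      have hmul := h1tendR.mul_const Cφ'
      rw [zero_mul] at hmul
      refine squeeze_zero_norm ?_ hmul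
      intro N
      have hfint : Integrable (fN N) μ := (hfN N).integrable hq1
      calc ‖∫ x, fN N x * φ x ∂μ‖ ≤ ∫ x, ‖fN N x * φ x‖ ∂μ := norm_integral_le_integral_norm _
        _ ≤ ∫ x, ‖fN N x‖ * Cφ' ∂μ := by
            refine integral_mono_of_nonneg (Filter.Eventually.of_forall (fun x => norm_nonneg _))
              (hfint.norm.mul_const Cφ') (Filter.Eventually.of_forall (fun x => ?_))
            show ‖fN N x * φ x‖ ≤ ‖fN N x‖ * Cφ'
            rw [norm_mul]
            exact mul_le_mul_of_nonneg_left (hCφ' x) (norm_nonneg _)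
        _ = (∫ x, ‖fN N x‖ ∂μ) * Cφ' := by rw [integral_mul_const]
        _ = (eLpNorm (fN N) 1 μ).toReal * Cφ' := by
            rw [integral_norm_eq_lintegral_enorm hfint.1, eLpNorm_one_eq_lintegral_enorm]
    -- combine
    have hsum : Tendsto (fun N => (∫ x, ⟪Z N x, gradient φ x⟫ ∂μ) +
        ∫ x, ⟪gradient W (gradient (uN N) x), gradient φ x⟫ ∂μ) 𝒰
        (𝓝 ((∫ x, ⟪Zc x, gradient φ x⟫ ∂μ) +
          ∫ x, ⟪gradient W (gradient u x), gradient φ x⟫ ∂μ)) :=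
      hTZ.add (hTW.mono_left hle)
    have hsum' : Tendsto (fun N => ∫ x, fN N x * φ x ∂μ) 𝒰
        (𝓝 ((∫ x, ⟪Zc x, gradient φ x⟫ ∂μ) +
          ∫ x, ⟪gradient W (gradient u x), gradient φ x⟫ ∂μ)) := by
      refine hsum.congr (fun N => ?_)
      exact hZeq N φ hφ
    exact tendsto_nhds_unique hsum' (hTf.mono_left hle)
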